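/- Let T and A be contractions on a Hilbert space H with ‖T‖ = 1, and suppose V_T, V_A are isometric dilations of T and A respectively on a common Hilbert space K ⊇ H (i.e., T = P_H V_T|_H and A = P_H V_A|_H with V_T, V_A isometries). If T ⊥_B A then V_T ⊥_B V_A. -/

import Mathlib

/-- If `T ⊥_B A` for contractions with `‖T‖ = 1`, then isometric dilations of `T` and `A`
on a common space are Birkhoff-James orthogonal. -/
theorem birkhoffJames_of_isometric_dilations
    {K : Type*} [NormedAddCommGroup K] [InnerProductSpace ℂ K] [CompleteSpace K]
    (p : Submodule ℂ K) [CompleteSpace p]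
    (T A : p →L[ℂ] p) (VT VA : K →L[ℂ] K)
    (hTc : ‖T‖ ≤ 1) (hAc : ‖A‖ ≤ 1)
    (hVT : ∀ y : K, ‖VT y‖ = ‖y‖) (hVA : ∀ y : K, ‖VA y‖ = ‖y‖)
    (hdilT : ∀ x : p, T x = p.orthogonalProjection (VT (x : K)))
    (hdilA : ∀ x : p, A x = p.orthogonalProjection (VA (x : K)))
    (hTnorm : ‖T‖ = 1)
    (hBJ : ∀ lam : ℂ, ‖T + lam • A‖ ≥ ‖T‖) :
    ∀ lam : ℂ, ‖VT + lam • VA‖ ≥ ‖VT‖ := by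
  intro lam
  -- ‖VT‖ ≤ 1
  have hVTle : ‖VT‖ ≤ 1 := by
    refine ContinuousLinearMap.opNorm_le_bound _ zero_le_one fun y => ?_
    rw [hVT y, one_mul]
  -- ‖T + lam • A‖ ≤ ‖VT + lam • VA‖
  have hcomp : ‖T + lam • A‖ ≤ ‖VT + lam • VA‖ := by
    refine ContinuousLinearMap.opNorm_le_bound _ (norm_nonneg _) fun x => ?_
    have hx : (T + lam • A) x = p.orthogonalProjection ((VT + lam • VA) (x : K)) := by
      simp [hdilT x, hdilA x, map_add, map_smul]
    rw [hx]
    calc ‖(p.orthogonalProjection ((VT + lam • VA) (x : K)) : p)‖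
        ≤ ‖(VT + lam • VA) (x : K)‖ :=
          p.orthogonalProjection.le_opNorm _ |>.trans
            (by nlinarith [Submodule.orthogonalProjectionOnto_norm_le p, norm_nonneg ((VT + lam • VA) (x : K)),
              p.orthogonalProjection.opNorm_nonneg])
      _ ≤ ‖VT + lam • VA‖ * ‖x‖ := (VT + lam • VA).le_opNorm _
  calc ‖VT‖ ≤ 1 := hVTle
    _ = ‖T‖ := hTnorm.symm
    _ ≤ ‖T + lam • A‖ := hBJ lam
    _ ≤ ‖VT + lam • VA‖ := hcomp
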